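/- Let φ : ℕ → (0,∞) satisfy φ(n)/n → ∞ as n → ∞ and limsup_{n→∞} (log φ(n))/n = log B with 1 ≤ B < ∞, and let ε > 0. For j, k ≥ 1 define c_{j,k} = exp(φ(k)) if 1 ≤ k ≤ j and c_{j,k} = exp(φ(k)·(B+ε)^{j−k}) if k ≥ j+1, and set L_j = sup_{k≥1} c_{j,k}. Then: (i) L_j is finite for every j; (ii) L_j ≤ L_{j+1} ≤ L_j^{B+ε} for all j ≥ 1; (iii) L_j ≥ exp(φ(j)) for all j ≥ 1; and (iv) liminf_{n→∞} (log L_n)/φ(n) = 1. -/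

import Mathlib

open Filter

theorem stmt_12 (φ : ℕ → ℝ) (hφpos : ∀ n, 0 < φ n)
    (hφ : Tendsto (fun n : ℕ => φ n / n) atTop atTop)
    (B : ℝ) (hB : 1 ≤ B)
    (hlogB : limsup (fun n : ℕ => ((Real.log (φ n) / n : ℝ) : EReal)) atTop
      = (Real.log B : EReal))
    (ε : ℝ) (hε : 0 < ε)
    (c : ℕ → ℕ → ℝ)
    (hc1 : ∀ j k, 1 ≤ k → k ≤ j → c j k = Real.exp (φ k))
    (hc2 : ∀ j k, j + 1 ≤ k → c j k = Real.exp (φ k * (B + ε) ^ ((j : ℤ) - (k : ℤ))))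
    (L : ℕ → ℝ) (hL : ∀ j, L j = sSup {y | ∃ k, 1 ≤ k ∧ y = c j k}) :
    (∀ j, BddAbove {y | ∃ k, 1 ≤ k ∧ y = c j k}) ∧
    (∀ j, 1 ≤ j → L j ≤ L (j + 1) ∧ L (j + 1) ≤ L j ^ (B + ε)) ∧
    (∀ j, 1 ≤ j → Real.exp (φ j) ≤ L j) ∧
    liminf (fun n : ℕ => Real.log (L n) / φ n) atTop = 1 := by
  have hB0 : (0:ℝ) < B := by linarith
  set θ : ℝ := B + ε with hθdef
  have hθ1 : 1 < θ := by simp only [hθdef]; linarith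
  have hθ0 : 0 < θ := by linarith
  have hθne : θ ≠ 0 := ne_of_gt hθ0
  have hlogθpos : Real.log B < Real.log θ := Real.log_lt_log hB0 (by linarith)
  set ρ : ℝ := Real.exp ((Real.log B + Real.log θ)/2) with hρdef
  have hρpos : 0 < ρ := Real.exp_pos _
  have hρθ : ρ < θ := by
    have h := Real.exp_lt_exp.mpr (show (Real.log B + Real.log θ)/2 < Real.log θ by linarith)
    rwa [Real.exp_log hθ0] at h
  -- eventual bound φ k ≤ ρ ^ k
  obtain ⟨K₀, hK₀1, hK₀⟩ : ∃ K : ℕ, 1 ≤ K ∧ ∀ k, K ≤ k → φ k ≤ ρ ^ k := by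
    have h1 : limsup (fun n : ℕ => ((Real.log (φ n) / n : ℝ) : EReal)) atTop
        < (((Real.log B + Real.log θ)/2 : ℝ) : EReal) := by
      rw [hlogB]; exact_mod_cast (by linarith : Real.log B < (Real.log B + Real.log θ)/2)
    have h2 := Filter.eventually_lt_of_limsup_lt h1
    obtain ⟨K, hK⟩ := (eventually_atTop).mp h2
    refine ⟨max K 1, le_max_right _ _, fun k hk => ?_⟩
    have hk1 : 1 ≤ k := le_trans (le_max_right _ _) hk
    have hkr : Real.log (φ k) / k < (Real.log B + Real.log θ)/2 := by
      exact_mod_cast hK k (le_trans (le_max_left _ _) hk)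
    have hkpos : (0:ℝ) < k := by exact_mod_cast hk1
    have h3 : Real.log (φ k) ≤ (k:ℝ) * ((Real.log B + Real.log θ)/2) := by
      rw [div_lt_iff₀ hkpos] at hkr; linarith
    calc φ k = Real.exp (Real.log (φ k)) := (Real.exp_log (hφpos k)).symm
      _ ≤ Real.exp ((k:ℝ) * ((Real.log B + Real.log θ)/2)) := Real.exp_le_exp.mpr h3
      _ = ρ ^ k := by rw [hρdef, ← Real.exp_nat_mul]
  have hφθ : ∀ k, K₀ ≤ k → φ k ≤ θ ^ k := fun k hk =>
    le_trans (hK₀ k hk) (pow_le_pow_left₀ hρpos.le hρθ.le k)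
  -- Part (i)
  have hBdd : ∀ j, BddAbove {y | ∃ k, 1 ≤ k ∧ y = c j k} := by
    intro j
    refine ⟨max (((Finset.range (max K₀ (j+1) + 1)).sup' (by simp) (c j)))
      (Real.exp (θ ^ j)), ?_⟩
    rintro y ⟨k, hk1, rfl⟩
    rcases le_or_gt k (max K₀ (j+1)) with h | h
    · exact le_trans (Finset.le_sup' (c j) (Finset.mem_range.mpr (by omega))) (le_max_left _ _)
    · have hkj : j + 1 ≤ k := le_trans (le_max_right _ _) h.le
      have hkK : K₀ ≤ k := le_trans (le_max_left _ _) h.le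
      rw [hc2 j k hkj]
      refine le_trans (Real.exp_le_exp.mpr ?_) (le_max_right _ _)
      have h2 : (0:ℝ) < θ ^ ((j:ℤ) - k) := zpow_pos hθ0 _
      calc φ k * θ ^ ((j:ℤ)-(k:ℤ)) ≤ θ^(k:ℤ) * θ^((j:ℤ)-k) := by
            refine mul_le_mul_of_nonneg_right ?_ h2.le
            rw [zpow_natCast]; exact hφθ k hkK
        _ = θ ^ (j:ℤ) := by rw [← zpow_add₀ hθne]; congr 1; ring
        _ = θ ^ j := zpow_natCast θ j
  -- basic facts
  have hcle : ∀ j k, 1 ≤ k → c j k ≤ L j := by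
    intro j k hk; rw [hL j]; exact le_csSup (hBdd j) ⟨k, hk, rfl⟩
  have hsne : ∀ j : ℕ, {y | ∃ k, 1 ≤ k ∧ y = c j k}.Nonempty := fun j => ⟨c j 1, 1, le_rfl, rfl⟩
  have hcpos : ∀ j k, 1 ≤ k → 0 < c j k := by
    intro j k hk
    rcases le_or_gt k j with h | h
    · rw [hc1 j k hk h]; exact Real.exp_pos _
    · rw [hc2 j k h]; exact Real.exp_pos _
  have hLge : ∀ j, 1 ≤ j → Real.exp (φ j) ≤ L j := by
    intro j hj
    rw [← hc1 j j hj le_rfl]; exact hcle j j hj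
  have hLpos : ∀ j, 0 < L j := fun j => lt_of_lt_of_le (hcpos j 1 le_rfl) (hcle j 1 le_rfl)
  -- Part (ii) first half
  have hccmono : ∀ j k, 1 ≤ k → c j k ≤ c (j+1) k := by
    intro j k hk1
    rcases le_or_gt k j with h | h
    · rw [hc1 j k hk1 h, hc1 (j+1) k hk1 (by omega)]
    · rcases eq_or_lt_of_le (show j + 1 ≤ k from h) with he | hlt
      · rw [hc2 j k h, hc1 (j+1) k hk1 (by omega)]
        apply Real.exp_le_exp.mpr
        have h1 : θ ^ ((j:ℤ) - k) ≤ 1 := zpow_le_one_of_nonpos₀ hθ1.le (by omega)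
        nlinarith [hφpos k]
      · rw [hc2 j k h, hc2 (j+1) k (by omega)]
        apply Real.exp_le_exp.mpr
        refine mul_le_mul_of_nonneg_left ?_ (hφpos k).le
        refine zpow_le_zpow_right₀ hθ1.le (by omega)
  have hmono : ∀ j : ℕ, L j ≤ L (j+1) := by
    intro j
    rw [hL j]
    refine csSup_le (hsne j) ?_
    rintro y ⟨k, hk1, rfl⟩
    exact le_trans (hccmono j k hk1) (hcle (j+1) k hk1)
  -- Part (ii) second half
  have hL1 : ∀ j, 1 ≤ j → 1 ≤ L j := fun j hj =>
    le_trans (Real.one_le_exp (hφpos j).le) (hLge j hj)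
  have hrpow : ∀ j, 1 ≤ j → L (j+1) ≤ L j ^ θ := by
    intro j hj
    rw [hL (j+1)]
    refine csSup_le (hsne (j+1)) ?_
    rintro y ⟨k, hk1, rfl⟩
    rcases le_or_gt k j with h | h
    · rw [hc1 (j+1) k hk1 (by omega), ← hc1 j k hk1 h]
      calc c j k ≤ L j := hcle j k hk1
        _ = L j ^ (1:ℝ) := (Real.rpow_one _).symm
        _ ≤ L j ^ θ := Real.rpow_le_rpow_of_exponent_le (hL1 j hj) hθ1.le
    · have key : c (j+1) k = (c j k) ^ θ := by
        rw [hc2 j k h, ← Real.exp_mul]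
        have he : φ k * θ ^ ((j:ℤ) - k) * θ = φ k * θ ^ (((j:ℤ)+1) - k) := by
          rw [mul_assoc, ← zpow_add_one₀ hθne]
          congr 2
          ring
        rw [he]
        rcases eq_or_lt_of_le (show j + 1 ≤ k from h) with he2 | hlt2
        · rw [hc1 (j+1) k hk1 (by omega),
            show ((j:ℤ)+1) - (k:ℤ) = 0 from by omega, zpow_zero, mul_one]
        · rw [hc2 (j+1) k (by omega)]
          norm_num
      rw [key]
      exact Real.rpow_le_rpow (hcpos j k hk1).le (hcle j k hk1) (by linarith)
  -- φ tends to infinity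
  have hφtop : Tendsto φ atTop atTop := by
    have h : ∀ᶠ n in atTop, φ n / n ≤ φ n := by
      filter_upwards [eventually_ge_atTop 1] with n hn
      have hn' : (1:ℝ) ≤ n := by exact_mod_cast hn
      rw [div_le_iff₀ (by linarith)]
      nlinarith [hφpos n]
    exact tendsto_atTop_mono' atTop h hφ
  -- frequently log L n / φ n ≤ 1 + η
  have hfreq : ∀ η : ℝ, 0 < η → ∃ᶠ n in atTop, Real.log (L n) / φ n ≤ 1 + η := by
    intro η hη
    by_contra hcon
    rw [not_frequently] at hcon
    obtain ⟨N, hN⟩ := eventually_atTop.mp hcon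
    have partner : ∀ n, N ≤ n → ∃ m, (1+η) * φ n ≤ φ m ∧
        (1+η) * (φ n * θ ^ ((m:ℤ) - n)) ≤ φ m := by
      intro n hn
      have h1 := hN n hn
      push_neg at h1
      have h2 : (1+η) * φ n < Real.log (L n) := by
        rw [lt_div_iff₀ (hφpos n)] at h1; linarith
      have h3 : Real.exp ((1+η) * φ n) < L n := by
        have h4 := Real.exp_lt_exp.mpr h2
        rwa [Real.exp_log (hLpos n)] at h4
      have h4 : ∃ k, 1 ≤ k ∧ Real.exp ((1+η)*φ n) < c n k := by
        by_contra hc'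
        push_neg at hc'
        have h5 : L n ≤ Real.exp ((1+η)*φ n) := by
          rw [hL n]
          refine csSup_le (hsne n) ?_
          rintro y ⟨k, hk, rfl⟩
          exact hc' k hk
        linarith
      obtain ⟨k, hk1, hk⟩ := h4
      rcases le_or_gt k n with h | h
      · rw [hc1 n k hk1 h] at hk
        have h6 : (1+η) * φ n < φ k := Real.exp_lt_exp.mp hk
        refine ⟨k, h6.le, ?_⟩
        have h7 : θ ^ ((k:ℤ) - n) ≤ 1 := zpow_le_one_of_nonpos₀ hθ1.le (by omega)
        have hpos : (0:ℝ) ≤ (1+η) * φ n := by nlinarith [hφpos n]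
        calc (1+η) * (φ n * θ ^ ((k:ℤ) - n)) = ((1+η) * φ n) * θ ^ ((k:ℤ) - n) := by ring
          _ ≤ ((1+η) * φ n) * 1 := mul_le_mul_of_nonneg_left h7 hpos
          _ = (1+η) * φ n := by ring
          _ ≤ φ k := h6.le
      · rw [hc2 n k h] at hk
        have h6 : (1+η) * φ n < φ k * θ ^ ((n:ℤ) - k) := Real.exp_lt_exp.mp hk
        have hzp : (0:ℝ) < θ ^ ((k:ℤ) - n) := zpow_pos hθ0 _
        have h8 : φ k * θ ^ ((n:ℤ) - k) * θ ^ ((k:ℤ) - n) = φ k := by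
          rw [mul_assoc, ← zpow_add₀ hθne,
            show (n:ℤ)-k+((k:ℤ)-n) = 0 from by ring, zpow_zero, mul_one]
        have h9 : (1+η) * (φ n * θ ^ ((k:ℤ) - n)) ≤ φ k := by
          calc (1+η) * (φ n * θ ^ ((k:ℤ) - n)) = ((1+η) * φ n) * θ ^ ((k:ℤ) - n) := by ring
            _ ≤ (φ k * θ ^ ((n:ℤ) - k)) * θ ^ ((k:ℤ) - n) :=
              mul_le_mul_of_nonneg_right h6.le hzp.le
            _ = φ k := h8
        refine ⟨k, ?_, h9⟩
        have h10 : (1:ℝ) ≤ θ ^ ((k:ℤ) - n) := one_le_zpow₀ hθ1.le (by omega)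
        have hpos : (0:ℝ) ≤ (1+η) * φ n := by nlinarith [hφpos n]
        calc (1+η) * φ n = ((1+η) * φ n) * 1 := by ring
          _ ≤ ((1+η) * φ n) * θ ^ ((k:ℤ) - n) := mul_le_mul_of_nonneg_left h10 hpos
          _ = (1+η) * (φ n * θ ^ ((k:ℤ) - n)) := by ring
          _ ≤ φ k := h9
    -- threshold
    have hCge : ∀ m, m ≤ N → φ m ≤ (Finset.range (N+1)).sup' (by simp) φ := fun m hm =>
      Finset.le_sup' φ (Finset.mem_range.mpr (by omega))
    set C : ℝ := (Finset.range (N+1)).sup' (by simp) φ with hC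
    have hCN : ∀ m : ℕ, C < φ m → N ≤ m := by
      intro m hm
      by_contra hm'
      push_neg at hm'
      exact absurd (hCge m (by omega)) (not_le.mpr hm)
    obtain ⟨n₀, hn₀⟩ := (hφtop.eventually (eventually_gt_atTop C)).exists
    have chain : ∀ i : ℕ, ∃ m : ℕ, C < φ m ∧ (1+η)^i * (φ n₀ * θ ^ ((m:ℤ) - n₀)) ≤ φ m := by
      intro i
      induction i with
      | zero => exact ⟨n₀, hn₀, by simp⟩
      | succ i ih =>
        obtain ⟨m, hmC, hmb⟩ := ih
        obtain ⟨m', h1, h2⟩ := partner m (hCN m hmC)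
        have hφm : 0 < φ m := hφpos m
        refine ⟨m', lt_of_lt_of_le hmC (le_trans (by nlinarith) h1), ?_⟩
        have hsplit : θ ^ ((m':ℤ) - n₀) = θ ^ ((m:ℤ) - n₀) * θ ^ ((m':ℤ) - m) := by
          rw [← zpow_add₀ hθne]; congr 1; ring
        calc (1+η)^(i+1) * (φ n₀ * θ ^ ((m':ℤ) - n₀))
            = (1+η) * ((1+η)^i * (φ n₀ * θ ^ ((m:ℤ) - n₀))) * θ ^ ((m':ℤ) - m) := by
              rw [hsplit]; ring
          _ ≤ (1+η) * φ m * θ ^ ((m':ℤ) - m) := by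
              refine mul_le_mul_of_nonneg_right ?_ (zpow_pos hθ0 _).le
              exact mul_le_mul_of_nonneg_left hmb (by linarith)
          _ = (1+η) * (φ m * θ ^ ((m':ℤ) - m)) := by ring
          _ ≤ φ m' := h2
    set c₀ : ℝ := φ n₀ * θ ^ (-(n₀:ℤ)) with hc₀
    have hc₀pos : 0 < c₀ := mul_pos (hφpos n₀) (zpow_pos hθ0 _)
    obtain ⟨M₁, hM₁⟩ : ∃ M₁ : ℕ, ∀ m, M₁ ≤ m → (ρ/θ)^m < c₀ := by
      obtain ⟨M₁, hM₁⟩ := exists_pow_lt_of_lt_one hc₀pos (by rw [div_lt_one hθ0]; exact hρθ)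
      refine ⟨M₁, fun m hm => lt_of_le_of_lt ?_ hM₁⟩
      exact pow_le_pow_of_le_one (by positivity) (by rw [div_le_one hθ0]; exact hρθ.le) hm
    have hDge : ∀ m, m ≤ max K₀ M₁ → φ m ≤ (Finset.range (max K₀ M₁ + 1)).sup' (by simp) φ :=
      fun m hm => Finset.le_sup' φ (Finset.mem_range.mpr (by omega))
    set D : ℝ := (Finset.range (max K₀ M₁ + 1)).sup' (by simp) φ with hD
    obtain ⟨i, hi⟩ : ∃ i : ℕ, D / c₀ < (1+η)^i := pow_unbounded_of_one_lt _ (by linarith)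
    obtain ⟨m, hmC, hmb⟩ := chain i
    have hkey : (1+η)^i * c₀ ≤ φ m := by
      refine le_trans ?_ hmb
      refine mul_le_mul_of_nonneg_left ?_ (by positivity)
      refine mul_le_mul_of_nonneg_left ?_ (hφpos n₀).le
      exact zpow_le_zpow_right₀ hθ1.le (by omega)
    have hbig : D < φ m := by
      have h1 : D < (1+η)^i * c₀ := by
        rw [div_lt_iff₀ hc₀pos] at hi; linarith
      linarith
    have hmM : max K₀ M₁ + 1 ≤ m := by
      by_contra h
      push_neg at h
      exact absurd (hDge m (by omega)) (not_le.mpr hbig)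
    have hfin1 : φ m ≤ ρ ^ m := hK₀ m (by omega)
    have hfin2 : c₀ * θ ^ m ≤ φ m := by
      have h1 : (1:ℝ) ≤ (1+η)^i := one_le_pow₀ (by linarith : (1:ℝ) ≤ 1+η)
      have h2 : c₀ * θ ^ m = φ n₀ * θ ^ ((m:ℤ) - n₀) := by
        rw [hc₀, mul_assoc, ← zpow_natCast θ m, ← zpow_add₀ hθne]
        congr 2
        ring
      have h3 : c₀ * θ ^ m ≤ (1+η)^i * (φ n₀ * θ ^ ((m:ℤ) - n₀)) := by
        rw [h2]
        nlinarith [mul_pos (hφpos n₀) (zpow_pos hθ0 ((m:ℤ) - n₀))]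
      exact le_trans h3 hmb
    have hfin3 : c₀ ≤ (ρ/θ)^m := by
      rw [div_pow, le_div_iff₀ (pow_pos hθ0 m)]
      exact le_trans hfin2 hfin1
    exact absurd hfin3 (not_le.mpr (hM₁ m (by omega)))
  -- combination
  have hfge : ∀ᶠ n in atTop, (1:ℝ) ≤ Real.log (L n) / φ n := by
    filter_upwards [eventually_ge_atTop 1] with n hn
    rw [le_div_iff₀ (hφpos n)]
    have h1 : φ n ≤ Real.log (L n) := by
      calc φ n = Real.log (Real.exp (φ n)) := (Real.log_exp _).symm
        _ ≤ Real.log (L n) := Real.log_le_log (Real.exp_pos _) (hLge n hn)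
    linarith
  have hliminf : liminf (fun n : ℕ => Real.log (L n) / φ n) atTop = 1 := by
    have hbdd : IsBoundedUnder (· ≥ ·) atTop (fun n : ℕ => Real.log (L n) / φ n) := ⟨1, hfge⟩
    refine le_antisymm ?_ ?_
    · refine le_of_forall_pos_le_add ?_
      intro η hη
      exact liminf_le_of_frequently_le (hfreq η hη) hbdd
    · refine le_liminf_of_le ?_ hfge
      exact IsCoboundedUnder.of_frequently_le (hfreq 1 one_pos)
  exact ⟨hBdd, fun j hj => ⟨hmono j, hrpow j hj⟩, hLge, hliminf⟩
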